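/- Let f ∈ L¹(ℝ^d) and define the frequency function r_x = inf{r > 0 : Mf(x) = A_r f(x)} when this set is non-empty and r_x = 0 otherwise. Then for every ε > 0, the set { x ∈ ℝ^d : r_x/|x| ∉ [0, ε) ∪ (1-ε, 1+ε) } is bounded. -/

import Mathlib

open MeasureTheory

noncomputable def contAvg (d : ℕ) (f : EuclideanSpace ℝ (Fin d) → ℝ) (r : ℝ)
    (x : EuclideanSpace ℝ (Fin d)) : ℝ :=
  (∫ y in Metric.ball x r, |f y|) / (volume (Metric.ball x r)).toReal

noncomputable def contMax (d : ℕ) (f : EuclideanSpace ℝ (Fin d) → ℝ)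
    (x : EuclideanSpace ℝ (Fin d)) : ℝ :=
  sSup ((fun r => contAvg d f r x) '' Set.Ioi (0 : ℝ))

/-- Frequency function: `inf {r > 0 : Mf(x) = A_r f(x)}`, and `0` if this set is
empty (note that in Mathlib `sInf ∅ = 0` for real sets). -/
noncomputable def contFreq (d : ℕ) (f : EuclideanSpace ℝ (Fin d) → ℝ)
    (x : EuclideanSpace ℝ (Fin d)) : ℝ :=
  sInf {r : ℝ | 0 < r ∧ contMax d f x = contAvg d f r x}

open Metric in
lemma myVol_ball {d : ℕ} (hd : 0 < d) (x : EuclideanSpace ℝ (Fin d)) {r : ℝ} (hr : 0 ≤ r) :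
    (volume (Metric.ball x r)).toReal
      = r ^ d * (volume (Metric.ball (0 : EuclideanSpace ℝ (Fin d)) 1)).toReal := by
  haveI : Nontrivial (EuclideanSpace ℝ (Fin d)) :=
    Module.nontrivial_of_finrank_pos (R := ℝ) (by rwa [finrank_euclideanSpace_fin])
  rw [Measure.addHaar_ball volume x hr, ENNReal.toReal_mul,
    ENNReal.toReal_ofReal (pow_nonneg hr _), finrank_euclideanSpace_fin]

lemma myAvg_eq {d : ℕ} (hd : 0 < d) (f : EuclideanSpace ℝ (Fin d) → ℝ) {r : ℝ} (hr : 0 ≤ r)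
    (x : EuclideanSpace ℝ (Fin d)) :
    contAvg d f r x = (∫ y in Metric.ball x r, |f y|)
      / (r ^ d * (volume (Metric.ball (0 : EuclideanSpace ℝ (Fin d)) 1)).toReal) := by
  rw [contAvg, myVol_ball hd x hr]

open Metric in
set_option maxHeartbeats 1000000 in
lemma core (d : ℕ) (f : EuclideanSpace ℝ (Fin d) → ℝ) (hf : Integrable f volume)
    (ε : ℝ) (hε : 0 < ε) :
    ∃ R : ℝ, ∀ x : EuclideanSpace ℝ (Fin d), R < ‖x‖ →
      contFreq d f x / ‖x‖ ∈ Set.Ico (0 : ℝ) ε ∪ Set.Ioo (1 - ε) (1 + ε) := by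
  have hfi : Integrable (fun y => |f y|) volume := hf.abs
  have hfae : 0 ≤ᶠ[ae volume] fun y => |f y| := Filter.Eventually.of_forall fun y => abs_nonneg _
  rcases Nat.eq_zero_or_pos d with hd0 | hd
  · refine ⟨1, fun x hx => absurd hx ?_⟩
    subst hd0
    haveI : Subsingleton (EuclideanSpace ℝ (Fin 0)) :=
      ⟨fun a b => PiLp.ext fun i => i.elim0⟩
    rw [Subsingleton.elim x 0]
    norm_num
  set I : ℝ := ∫ y, |f y| with hIdef
  have hInn : 0 ≤ I := integral_nonneg fun y => abs_nonneg _
  set c := (volume (Metric.ball (0 : EuclideanSpace ℝ (Fin d)) 1)).toReal with hcdef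
  have hc : 0 < c :=
    ENNReal.toReal_pos (measure_ball_pos volume 0 one_pos).ne' measure_ball_lt_top.ne
  rcases eq_or_lt_of_le hInn with hI0 | hI
  · -- integral of |f| is zero : all averages vanish
    refine ⟨1, fun x _ => ?_⟩
    have hzero : ∀ r : ℝ, contAvg d f r x = 0 := by
      intro r
      have h1 : (∫ y in ball x r, |f y|) = 0 :=
        le_antisymm (hI0 ▸ setIntegral_le_integral hfi hfae)
          (setIntegral_nonneg measurableSet_ball fun _ _ => abs_nonneg _)
      rw [contAvg, h1, zero_div]
    have himg : (fun r => contAvg d f r x) '' Set.Ioi (0:ℝ) = {0} := by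
      rw [show (fun r => contAvg d f r x) = fun _ => (0:ℝ) from funext hzero]
      exact Set.Nonempty.image_const Set.nonempty_Ioi 0
    have hmax : contMax d f x = 0 := by rw [contMax, himg, csSup_singleton]
    have hfreq : contFreq d f x = 0 := by
      rw [contFreq]
      have hSet : {r : ℝ | 0 < r ∧ contMax d f x = contAvg d f r x} = Set.Ioi 0 := by
        ext r
        simp [hmax, hzero r, Set.mem_Ioi]
      rw [hSet, csInf_Ioi]
    left
    rw [hfreq, zero_div]
    exact ⟨le_refl 0, hε⟩
  -- main case : positive mass
  set ε₀ : ℝ := min ε 1 / 2 with hε₀def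
  have hmin : 0 < min ε 1 := lt_min hε one_pos
  have hε₀ : 0 < ε₀ := by positivity
  have hε₀ε : ε₀ < ε := by
    have h1 : min ε 1 ≤ ε := min_le_left ε 1
    rw [hε₀def]; linarith
  have hε₀1 : ε₀ ≤ 1/2 := by
    have h1 : min ε 1 ≤ 1 := min_le_right ε 1
    rw [hε₀def]; linarith
  -- choose a radius capturing most of the mass
  have hB : Filter.Tendsto
      (fun n : ℕ => ∫ y in ball (0 : EuclideanSpace ℝ (Fin d)) (n:ℝ), |f y|)
      Filter.atTop (nhds I) := by
    have h := tendsto_setIntegral_of_monotone (μ := volume)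
      (s := fun n : ℕ => ball (0 : EuclideanSpace ℝ (Fin d)) (n:ℝ))
      (fun _ => measurableSet_ball)
      (fun i j hij => Metric.ball_subset_ball (by exact_mod_cast hij))
      (by rw [Metric.iUnion_ball_nat]; exact hfi.integrableOn)
    rwa [Metric.iUnion_ball_nat, setIntegral_univ] at h
  have l1 : Filter.Tendsto
      (fun n : ℕ => (I - ∫ y in ball (0 : EuclideanSpace ℝ (Fin d)) (n:ℝ), |f y|) * (1+ε₀/2)^d)
      Filter.atTop (nhds 0) := by
    have := (tendsto_const_nhds (x := I) (f := Filter.atTop (α := ℕ))).sub hB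
    simpa using this.mul_const ((1+ε₀/2)^d)
  have l2 := hB.mul_const (ε₀^d)
  have l3 := hB.mul_const ((1+ε₀)^d)
  have hev1 := l1.eventually_lt l2 (by positivity)
  have hev2 := (tendsto_const_nhds (x := I * (1+ε₀/2)^d)
      (f := Filter.atTop (α := ℕ))).eventually_lt l3
    (by
      have hpow : (1+ε₀/2)^d < (1+ε₀)^d :=
        pow_lt_pow_left₀ (by linarith) (by linarith) hd.ne'
      exact mul_lt_mul_of_pos_left hpow hI)
  obtain ⟨n, hP1, hP2⟩ := (hev1.and hev2).exists
  set ρ : ℝ := (n : ℝ) with hρdef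
  have hρ0 : 0 ≤ ρ := Nat.cast_nonneg n
  set B : ℝ := ∫ y in ball (0 : EuclideanSpace ℝ (Fin d)) ρ, |f y| with hBdef
  have hBle : B ≤ I := setIntegral_le_integral hfi hfae
  have hB0 : 0 ≤ B := setIntegral_nonneg measurableSet_ball fun _ _ => abs_nonneg _
  have hcompl : (∫ y in (ball (0 : EuclideanSpace ℝ (Fin d)) ρ)ᶜ, |f y|) = I - B := by
    have h := integral_add_compl (measurableSet_ball
      (x := (0 : EuclideanSpace ℝ (Fin d))) (ε := ρ)) hfi
    rw [← hIdef] at h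
    linarith [h]
  refine ⟨max (2*ρ/ε₀) 1, fun x hx => ?_⟩
  have hx1 : 1 < ‖x‖ := lt_of_le_of_lt (le_max_right _ _) hx
  have hxpos : 0 < ‖x‖ := by linarith
  have hρx : 2*ρ ≤ ε₀*‖x‖ := by
    have h2 : 2*ρ/ε₀ < ‖x‖ := lt_of_le_of_lt (le_max_left _ _) hx
    rw [div_lt_iff₀ hε₀] at h2
    nlinarith
  have hsle : ‖x‖ + ρ ≤ (1+ε₀/2)*‖x‖ := by nlinarith
  -- lower bound for the maximal function
  have hlow : B / (((1+ε₀/2)*‖x‖)^d * c) ≤ contAvg d f (‖x‖ + ρ) x := by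
    have hs : (0:ℝ) < ‖x‖ + ρ := by linarith
    have hsub : ball (0 : EuclideanSpace ℝ (Fin d)) ρ ⊆ ball x (‖x‖+ρ) := by
      intro y hy
      rw [Metric.mem_ball] at hy ⊢
      have h1 : dist y x ≤ dist y 0 + dist 0 x := dist_triangle _ _ _
      have h2 : dist (0 : EuclideanSpace ℝ (Fin d)) x = ‖x‖ := by
        rw [dist_comm, dist_zero_right]
      linarith
    have hnum : B ≤ ∫ y in ball x (‖x‖+ρ), |f y| :=
      setIntegral_mono_set hfi.integrableOn (ae_restrict_of_ae hfae) hsub.eventuallyLE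
    rw [myAvg_eq hd f hs.le x, ← hcdef]
    exact div_le_div₀
      (setIntegral_nonneg measurableSet_ball fun _ _ => abs_nonneg _) hnum
      (by positivity)
      (mul_le_mul_of_nonneg_right (pow_le_pow_left₀ hs.le hsle d) hc.le)
  -- upper bound for middle radii
  have hmid : ∀ r : ℝ, ε₀*‖x‖ ≤ r → r ≤ (1-ε₀)*‖x‖ →
      contAvg d f r x ≤ (I - B) / ((ε₀*‖x‖)^d * c) := by
    intro r h1 h2
    have hrpos : 0 < r := lt_of_lt_of_le (by positivity) h1
    have hsub : ball x r ⊆ (ball (0 : EuclideanSpace ℝ (Fin d)) ρ)ᶜ := by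
      intro y hy
      simp only [Set.mem_compl_iff, Metric.mem_ball, not_lt] at hy ⊢
      have h3 : dist x 0 ≤ dist x y + dist y 0 := dist_triangle _ _ _
      have h4 : dist x (0 : EuclideanSpace ℝ (Fin d)) = ‖x‖ := dist_zero_right x
      have h5 : dist x y = dist y x := dist_comm _ _
      have h6 : (1-ε₀)*‖x‖ + ε₀*‖x‖ = ‖x‖ := by ring
      linarith only [h2, h3, h4, h5, hy, h6, hρx, hρ0]
    have hnum : (∫ y in ball x r, |f y|) ≤ I - B := by
      rw [← hcompl]
      exact setIntegral_mono_set (hfi.integrableOn) (ae_restrict_of_ae hfae)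
        hsub.eventuallyLE
    rw [myAvg_eq hd f hrpos.le x, ← hcdef]
    exact div_le_div₀ (by linarith) hnum (by positivity)
      (mul_le_mul_of_nonneg_right (pow_le_pow_left₀ (by positivity) h1 d) hc.le)
  -- upper bound for far radii
  have hfar : ∀ r : ℝ, (1+ε₀)*‖x‖ ≤ r →
      contAvg d f r x ≤ I / (((1+ε₀)*‖x‖)^d * c) := by
    intro r h1
    have hrpos : 0 < r := lt_of_lt_of_le (by positivity) h1
    have hnum : (∫ y in ball x r, |f y|) ≤ I := setIntegral_le_integral hfi hfae
    rw [myAvg_eq hd f hrpos.le x, ← hcdef]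
    exact div_le_div₀ hInn hnum (by positivity)
      (mul_le_mul_of_nonneg_right (pow_le_pow_left₀ (by positivity) h1 d) hc.le)
  -- the two strict comparisons
  have chain1 : (I - B) / ((ε₀*‖x‖)^d * c) < B / (((1+ε₀/2)*‖x‖)^d * c) := by
    rw [div_lt_div_iff₀ (by positivity) (by positivity), mul_pow, mul_pow]
    have h := mul_lt_mul_of_pos_right hP1 (show (0:ℝ) < ‖x‖^d * c by positivity)
    ring_nf at h ⊢
    linarith
  have chain2 : I / (((1+ε₀)*‖x‖)^d * c) < B / (((1+ε₀/2)*‖x‖)^d * c) := by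
    rw [div_lt_div_iff₀ (by positivity) (by positivity), mul_pow, mul_pow]
    have h := mul_lt_mul_of_pos_right hP2 (show (0:ℝ) < ‖x‖^d * c by positivity)
    ring_nf at h ⊢
    linarith
  set S : Set ℝ := {r : ℝ | 0 < r ∧ contMax d f x = contAvg d f r x} with hSdef
  have hfreqS : contFreq d f x = sInf S := rfl
  have hSbd : BddBelow S := ⟨0, fun y hy => hy.1.le⟩
  rcases S.eq_empty_or_nonempty with hSe | hSne
  · left
    rw [hfreqS, hSe, Real.sInf_empty, zero_div]
    exact ⟨le_refl 0, hε⟩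
  by_cases hbdd : BddAbove ((fun r => contAvg d f r x) '' Set.Ioi (0:ℝ))
  · obtain ⟨r₀, hr₀⟩ := hSne
    have hM : B / (((1+ε₀/2)*‖x‖)^d * c) ≤ contMax d f x :=
      le_trans hlow (le_csSup hbdd ⟨‖x‖+ρ, Set.mem_Ioi.2 (by linarith), rfl⟩)
    have key : ∀ r ∈ S, r < ε₀*‖x‖ ∨ ((1-ε₀)*‖x‖ < r ∧ r < (1+ε₀)*‖x‖) := by
      rintro r ⟨hrpos, hrEq⟩
      by_contra hcon
      push_neg at hcon
      obtain ⟨h1, h2⟩ := hcon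
      have hM' : B / (((1+ε₀/2)*‖x‖)^d * c) ≤ contAvg d f r x := hrEq ▸ hM
      rcases le_or_gt r ((1-ε₀)*‖x‖) with hle | hgt
      · linarith [hmid r h1 hle, chain1]
      · linarith [hfar r (h2 hgt), chain2]
    by_cases hsmall : ∃ r ∈ S, r < ε₀*‖x‖
    · obtain ⟨r, hrS, hrlt⟩ := hsmall
      left
      rw [hfreqS]
      refine ⟨div_nonneg (Real.sInf_nonneg fun y hy => hy.1.le) hxpos.le, ?_⟩
      rw [div_lt_iff₀ hxpos]
      have h4 : sInf S ≤ r := csInf_le hSbd hrS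
      nlinarith
    · push_neg at hsmall
      have hall : ∀ r ∈ S, (1-ε₀)*‖x‖ < r ∧ r < (1+ε₀)*‖x‖ := fun r hr =>
        (key r hr).resolve_left (not_lt.2 (hsmall r hr))
      right
      rw [hfreqS]
      have hlow2 : (1-ε₀)*‖x‖ ≤ sInf S :=
        le_csInf ⟨r₀, hr₀⟩ fun r hr => (hall r hr).1.le
      have hup : sInf S < (1+ε₀)*‖x‖ :=
        lt_of_le_of_lt (csInf_le hSbd hr₀) (hall r₀ hr₀).2
      constructor
      · rw [lt_div_iff₀ hxpos]; nlinarith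
      · rw [div_lt_iff₀ hxpos]; nlinarith
  · -- maximal function "infinite" : junk value 0
    obtain ⟨r₀, hr₀pos, hr₀eq⟩ := hSne
    have hmax0 : contMax d f x = 0 := Real.sSup_of_not_bddAbove hbdd
    have hnum0 : (∫ y in ball x r₀, |f y|) = 0 := by
      have h5 : contAvg d f r₀ x = 0 := by rw [← hr₀eq, hmax0]
      rw [myAvg_eq hd f hr₀pos.le x, ← hcdef] at h5
      rcases div_eq_zero_iff.1 h5 with h | h
      · exact h
      · exact absurd h (by positivity)
    have hmem : ∀ t : ℝ, 0 < t → min t r₀ ∈ S := by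
      intro t ht
      refine ⟨lt_min ht hr₀pos, ?_⟩
      have hle : (∫ y in ball x (min t r₀), |f y|) ≤ 0 :=
        hnum0 ▸ setIntegral_mono_set hfi.integrableOn (ae_restrict_of_ae hfae)
          (Metric.ball_subset_ball (min_le_right t r₀)).eventuallyLE
      have hnn : (0:ℝ) ≤ ∫ y in ball x (min t r₀), |f y| :=
        setIntegral_nonneg measurableSet_ball fun _ _ => abs_nonneg _
      rw [hmax0, contAvg, le_antisymm hle hnn, zero_div]
    have hfreq0 : contFreq d f x = 0 := by
      rw [hfreqS]
      refine le_antisymm ?_ (Real.sInf_nonneg fun y hy => hy.1.le)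
      by_contra hpos
      push_neg at hpos
      have h6 := csInf_le hSbd (hmem (sInf S / 2) (by linarith))
      have h7 := min_le_left (sInf S / 2) r₀
      linarith
    left
    rw [hfreq0, zero_div]
    exact ⟨le_refl 0, hε⟩

theorem stmt6 (d : ℕ) (f : EuclideanSpace ℝ (Fin d) → ℝ) (hf : Integrable f volume)
    (ε : ℝ) (hε : 0 < ε) :
    Bornology.IsBounded {x : EuclideanSpace ℝ (Fin d) |
      contFreq d f x / ‖x‖ ∉ Set.Ico (0 : ℝ) ε ∪ Set.Ioo (1 - ε) (1 + ε)} := by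
  obtain ⟨R, hR⟩ := core d f hf ε hε
  apply (Metric.isBounded_closedBall (x := (0 : EuclideanSpace ℝ (Fin d))) (r := R)).subset
  intro x hx
  simp only [Set.mem_setOf_eq] at hx
  by_contra h
  exact hx (hR x (by simpa [Metric.mem_closedBall, dist_zero_right, not_le] using h))
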